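/- Let Ext₁ : {0,1}^n × {0,1}^d → {0,1}^m be a (k₁, ε₁) seeded extractor and Ext₂ : {0,1}^n × {0,1}^m → {0,1}^{m₂} a strong (k₂, ε₂) seeded extractor. Let Y be an (n, 2k₁)-source and X an independent (n, k₂)-source. For i = 0, 1, …, 2^d − 1 let r_i ∈ {0,1}^d be the binary expression of i and let Z_i = Ext₂(X, Ext₁(Y, r_i)). Then with probability at least 1 − 2^{−k₁} over y ← Y there exists a subset S ⊆ {0, 1, …, 2^d − 1} with |S| ≥ (1 − √ε₂ − ε₁)·2^d such that for every i ∈ S, |Ext₂(X, Ext₁(y, r_i)) − U_{m₂}| ≤ √ε₂. -/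

import Mathlib

open Finset

abbrev BitStr (n : ℕ) := Fin n → Bool

/-- `p` is a probability distribution on the finite type `α`. -/
def IsProb {α : Type*} [Fintype α] (p : α → ℝ) : Prop :=
  (∀ a, 0 ≤ p a) ∧ ∑ a, p a = 1

/-- Statistical distance: `max_{T ⊆ α} |p(T) − q(T)|`. -/
noncomputable def statDist {α : Type*} [Fintype α] (p q : α → ℝ) : ℝ :=
  ⨆ T : Finset α, |∑ a ∈ T, p a - ∑ a ∈ T, q a|

/-- `H_∞(p) ≥ k`, i.e. every point has probability at most `2^(-k)`. -/
def IsKSource {α : Type*} [Fintype α] (p : α → ℝ) (k : ℝ) : Prop :=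
  ∀ a, p a ≤ (2 : ℝ) ^ (-k)

/-- The uniform distribution on a finite type. -/
noncomputable def unif (α : Type*) [Fintype α] : α → ℝ := fun _ => (Fintype.card α : ℝ)⁻¹


/-- `Ext` is a `(k, ε)` seeded extractor. -/
def IsSeededExtractor {n d m : ℕ} (Ext : BitStr n → BitStr d → BitStr m)
    (k ε : ℝ) : Prop :=
  ∀ p : BitStr n → ℝ, IsProb p → IsKSource p k →
    statDist
      (fun v : BitStr m =>
        ∑ x : BitStr n, ∑ r : BitStr d,
          if Ext x r = v then p x * unif (BitStr d) r else 0)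
      (unif (BitStr m)) ≤ ε

/-- `Ext` is a strong `(k, ε)` seeded extractor: the output is `ε`-close to uniform
even jointly with the seed. -/
def IsStrongSeededExtractor {n d m : ℕ} (Ext : BitStr n → BitStr d → BitStr m)
    (k ε : ℝ) : Prop :=
  ∀ p : BitStr n → ℝ, IsProb p → IsKSource p k →
    statDist
      (fun z : BitStr m × BitStr d =>
        (∑ x : BitStr n, if Ext x z.2 = z.1 then p x else 0) * unif (BitStr d) z.2)
      (fun z => unif (BitStr m) z.1 * unif (BitStr d) z.2) ≤ ε

open Classical in
/-- The probability that a sample from `p` satisfies `P`. -/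
noncomputable def probOf {α : Type*} [Fintype α] (p : α → ℝ) (P : α → Prop) : ℝ :=
  ∑ a, if P a then p a else 0


section Helpers

lemma le_statDist {α : Type*} [Fintype α] (p q : α → ℝ) (T : Finset α) :
    |∑ a ∈ T, p a - ∑ a ∈ T, q a| ≤ statDist p q := by
  unfold statDist
  exact le_ciSup (f := fun T : Finset α => |∑ a ∈ T, p a - ∑ a ∈ T, q a|)
    (Set.Finite.bddAbove (Set.finite_range _)) T

lemma statDist_nonneg {α : Type*} [Fintype α] (p q : α → ℝ) : 0 ≤ statDist p q := by
  have := le_statDist p q ∅; simpa using this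

lemma statDist_le {α : Type*} [Fintype α] {p q : α → ℝ} {c : ℝ}
    (h : ∀ T : Finset α, |∑ a ∈ T, p a - ∑ a ∈ T, q a| ≤ c) : statDist p q ≤ c := by
  unfold statDist; exact ciSup_le h

open Classical in
lemma statDist_eq {α : Type*} [Fintype α] {p q : α → ℝ} (hp : IsProb p) (hq : IsProb q) :
    statDist p q = ∑ a ∈ univ.filter (fun a => q a < p a), (p a - q a) := by
  set D := ∑ a ∈ univ.filter (fun a => q a < p a), (p a - q a) with hD
  have key : ∀ T : Finset α, ∑ a ∈ T, (p a - q a) ≤ D := by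
    intro T
    have h1 : ∑ a ∈ T, (p a - q a) ≤ ∑ a ∈ T.filter (fun a => q a < p a), (p a - q a) := by
      rw [← Finset.sum_filter_add_sum_filter_not T (fun a => q a < p a)]
      have h2 : ∑ a ∈ T.filter (fun a => ¬ q a < p a), (p a - q a) ≤ 0 :=
        Finset.sum_nonpos (by intro a ha; simp only [Finset.mem_filter] at ha; linarith [ha.2])
      linarith
    refine h1.trans (Finset.sum_le_sum_of_subset_of_nonneg
      (Finset.filter_subset_filter _ (Finset.subset_univ T)) ?_)
    intro a ha _; simp only [Finset.mem_filter] at ha; linarith [ha.2]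
  apply le_antisymm
  · apply statDist_le
    intro T
    rw [abs_le]
    have hT : ∑ a ∈ T, (p a - q a) = ∑ a ∈ T, p a - ∑ a ∈ T, q a := Finset.sum_sub_distrib _ _
    have hTc : ∑ a ∈ Tᶜ, (p a - q a) ≤ D := key Tᶜ
    have e1 : ∑ a ∈ T, p a + ∑ a ∈ Tᶜ, p a = 1 := by rw [Finset.sum_add_sum_compl]; exact hp.2
    have e2 : ∑ a ∈ T, q a + ∑ a ∈ Tᶜ, q a = 1 := by rw [Finset.sum_add_sum_compl]; exact hq.2
    have hTc' : ∑ a ∈ Tᶜ, (p a - q a) = ∑ a ∈ Tᶜ, p a - ∑ a ∈ Tᶜ, q a := Finset.sum_sub_distrib _ _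
    constructor
    · linarith [key T]
    · linarith [key T]
  · have hle := le_statDist p q (univ.filter (fun a => q a < p a))
    calc D ≤ |D| := le_abs_self D
      _ = |∑ a ∈ univ.filter (fun a => q a < p a), p a
            - ∑ a ∈ univ.filter (fun a => q a < p a), q a| := by
          rw [hD, Finset.sum_sub_distrib]
      _ ≤ _ := hle

lemma unif_eq (ℓ : ℕ) (w : BitStr ℓ) : unif (BitStr ℓ) w = ((2:ℝ)^ℓ)⁻¹ := by
  simp [unif, Fintype.card_fun]

lemma unif_pos (ℓ : ℕ) (w : BitStr ℓ) : 0 < unif (BitStr ℓ) w := by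
  rw [unif_eq]; positivity

lemma unif_isProb (ℓ : ℕ) : IsProb (unif (BitStr ℓ)) := by
  constructor
  · intro a; exact (unif_pos ℓ a).le
  · simp only [unif, Finset.sum_const, Finset.card_univ, nsmul_eq_mul]
    rw [mul_inv_cancel₀]
    exact_mod_cast Fintype.card_ne_zero (α := BitStr ℓ)

lemma row_isProb {n m m₂ : ℕ} (Ext₂ : BitStr n → BitStr m → BitStr m₂)
    (pX : BitStr n → ℝ) (hpX : IsProb pX) (w : BitStr m) :
    IsProb (fun v : BitStr m₂ => ∑ x, if Ext₂ x w = v then pX x else 0) := by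
  classical
  constructor
  · intro v
    exact Finset.sum_nonneg fun x _ => by split <;> simp [hpX.1 x]
  · simp only
    rw [Finset.sum_comm]
    simp only [Finset.sum_ite_eq, Finset.mem_univ, if_true]
    exact hpX.2

open Classical in
lemma joint_decomp {n m m₂ : ℕ} (Ext₂ : BitStr n → BitStr m → BitStr m₂)
    (pX : BitStr n → ℝ) (hpX : IsProb pX) :
    statDist
      (fun z : BitStr m₂ × BitStr m =>
        (∑ x : BitStr n, if Ext₂ x z.2 = z.1 then pX x else 0) * unif (BitStr m) z.2)
      (fun z => unif (BitStr m₂) z.1 * unif (BitStr m) z.2)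
    = ∑ w : BitStr m, unif (BitStr m) w *
        statDist (fun v : BitStr m₂ => ∑ x, if Ext₂ x w = v then pX x else 0)
          (unif (BitStr m₂)) := by
  have hrow := row_isProb Ext₂ pX hpX
  have hU := unif_isProb m₂
  have hrowsum : ∀ w : BitStr m,
      ∑ v : BitStr m₂, (∑ x : BitStr n, if Ext₂ x w = v then pX x else 0) = 1 :=
    fun w => (hrow w).2
  have hjoint : IsProb (fun z : BitStr m₂ × BitStr m =>
      (∑ x : BitStr n, if Ext₂ x z.2 = z.1 then pX x else 0) * unif (BitStr m) z.2) := by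
    constructor
    · intro z; exact mul_nonneg ((hrow z.2).1 z.1) (unif_pos m z.2).le
    · rw [Fintype.sum_prod_type, Finset.sum_comm]
      have e : ∀ w : BitStr m,
          ∑ v : BitStr m₂, (∑ x : BitStr n, if Ext₂ x w = v then pX x else 0) * unif (BitStr m) w
          = unif (BitStr m) w := by
        intro w; rw [← Finset.sum_mul, hrowsum w, one_mul]
      calc ∑ w : BitStr m, ∑ v : BitStr m₂,
            (∑ x : BitStr n, if Ext₂ x w = v then pX x else 0) * unif (BitStr m) w
          = ∑ w : BitStr m, unif (BitStr m) w := Finset.sum_congr rfl fun w _ => e w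
        _ = 1 := (unif_isProb m).2
  have hQ : IsProb (fun z : BitStr m₂ × BitStr m => unif (BitStr m₂) z.1 * unif (BitStr m) z.2) := by
    constructor
    · intro z; exact mul_nonneg (unif_pos m₂ z.1).le (unif_pos m z.2).le
    · rw [Fintype.sum_prod_type]
      have e : ∀ v : BitStr m₂, ∑ w : BitStr m, unif (BitStr m₂) v * unif (BitStr m) w
          = unif (BitStr m₂) v := by
        intro v; rw [← Finset.mul_sum, (unif_isProb m).2, mul_one]
      calc ∑ v : BitStr m₂, ∑ w : BitStr m, unif (BitStr m₂) v * unif (BitStr m) w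
          = ∑ v : BitStr m₂, unif (BitStr m₂) v := Finset.sum_congr rfl fun v _ => e v
        _ = 1 := (unif_isProb m₂).2
  rw [statDist_eq hjoint hQ, Finset.sum_filter, Fintype.sum_prod_type, Finset.sum_comm]
  refine Finset.sum_congr rfl fun w _ => ?_
  rw [statDist_eq (hrow w) hU, Finset.mul_sum, Finset.sum_filter]
  refine Finset.sum_congr rfl fun v _ => ?_
  have hu := unif_pos m w
  by_cases h : unif (BitStr m₂) v < ∑ x : BitStr n, if Ext₂ x w = v then pX x else 0
  · rw [if_pos ((mul_lt_mul_iff_left₀ hu).mpr h), if_pos h]; ring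
  · rw [if_neg (fun hc => h ((mul_lt_mul_iff_left₀ hu).mp hc)), if_neg h]

end Helpers


open Classical in
lemma probOf_nonneg {α : Type*} [Fintype α] {p : α → ℝ} (hp : ∀ a, 0 ≤ p a)
    (P : α → Prop) : 0 ≤ probOf p P := by
  refine Finset.sum_nonneg fun a _ => ?_
  split <;> simp [hp a]

open Classical in
lemma probOf_mono {α : Type*} [Fintype α] {p : α → ℝ} (hp : ∀ a, 0 ≤ p a)
    {P Q : α → Prop} (h : ∀ a, P a → Q a) : probOf p P ≤ probOf p Q := by
  refine Finset.sum_le_sum fun a _ => ?_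
  by_cases hP : P a
  · rw [if_pos hP, if_pos (h a hP)]
  · rw [if_neg hP]; split <;> simp [hp a]

open Classical in
lemma probOf_compl {α : Type*} [Fintype α] {p : α → ℝ} (hsum : ∑ a, p a = 1)
    (P : α → Prop) : probOf p P + probOf p (fun a => ¬ P a) = 1 := by
  rw [probOf, probOf, ← Finset.sum_add_distrib, ← hsum]
  refine Finset.sum_congr rfl fun a _ => ?_
  by_cases h : P a <;> simp [h]

/-- Let `Ext₁` be a `(k₁,ε₁)` seeded extractor and `Ext₂` a strong
`(k₂,ε₂)` seeded extractor, `Y` an `(n,2k₁)`-source and `X` an independent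
`(n,k₂)`-source. Then with probability at least `1 − 2^{−k₁}` over `y ← Y` there is a
set `S` of seeds of `Ext₁` of size at least `(1 − √ε₂ − ε₁)·2^d` such that for every
`r ∈ S` the distribution `Ext₂(X, Ext₁(y, r))` is `√ε₂`-close to uniform. -/
theorem sampled_rows_close_to_uniform {n d m m₂ : ℕ}
    (Ext₁ : BitStr n → BitStr d → BitStr m) (Ext₂ : BitStr n → BitStr m → BitStr m₂)
    (k₁ k₂ ε₁ ε₂ : ℝ)
    (h1 : IsSeededExtractor Ext₁ k₁ ε₁) (h2 : IsStrongSeededExtractor Ext₂ k₂ ε₂)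
    (pX pY : BitStr n → ℝ) (hpX : IsProb pX) (hpY : IsProb pY)
    (hY : IsKSource pY (2 * k₁)) (hX : IsKSource pX k₂) :
    1 - (2 : ℝ) ^ (-k₁) ≤
      probOf pY (fun y =>
        ∃ S : Finset (BitStr d),
          (1 - Real.sqrt ε₂ - ε₁) * 2 ^ d ≤ (S.card : ℝ) ∧
          ∀ r ∈ S,
            statDist
              (fun v : BitStr m₂ =>
                ∑ x : BitStr n, if Ext₂ x (Ext₁ y r) = v then pX x else 0)
              (unif (BitStr m₂)) ≤ Real.sqrt ε₂) := by
  classical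
  by_cases hk : k₁ ≤ 0
  · have h1' : (1:ℝ) ≤ (2:ℝ)^(-k₁) := by
      rw [show (1:ℝ) = (2:ℝ)^(0:ℝ) by rw [Real.rpow_zero]]
      exact Real.rpow_le_rpow_of_exponent_le one_le_two (by linarith)
    linarith [probOf_nonneg hpY.1 (fun y : BitStr n =>
      ∃ S : Finset (BitStr d),
        (1 - Real.sqrt ε₂ - ε₁) * 2 ^ d ≤ (S.card : ℝ) ∧
        ∀ r ∈ S,
          statDist
            (fun v : BitStr m₂ =>
              ∑ x : BitStr n, if Ext₂ x (Ext₁ y r) = v then pX x else 0)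
            (unif (BitStr m₂)) ≤ Real.sqrt ε₂)]
  push_neg at hk
  have hYk₁ : IsKSource pY k₁ := fun a =>
    (hY a).trans (Real.rpow_le_rpow_of_exponent_le one_le_two (by linarith))
  have hε₁ : 0 ≤ ε₁ := le_trans (statDist_nonneg _ _) (h1 pY hpY hYk₁)
  have hε₂ : 0 ≤ ε₂ := le_trans (statDist_nonneg _ _) (h2 pX hpX hX)
  set s := Real.sqrt ε₂ with hs
  have hs0 : 0 ≤ s := Real.sqrt_nonneg _
  set dist : BitStr m → ℝ := fun w =>
    statDist (fun v : BitStr m₂ => ∑ x, if Ext₂ x w = v then pX x else 0)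
      (unif (BitStr m₂)) with hdist
  have hdist0 : ∀ w, 0 ≤ dist w := fun w => statDist_nonneg _ _
  have havg : ∑ w : BitStr m, unif (BitStr m) w * dist w ≤ ε₂ := by
    rw [hdist, ← joint_decomp Ext₂ pX hpX]
    exact h2 pX hpX hX
  set B : Finset (BitStr m) := univ.filter (fun w => s < dist w) with hBdef
  have hB : (B.card : ℝ) * ((2:ℝ)^m)⁻¹ ≤ s := by
    have hBsum : s * ((B.card:ℝ) * ((2:ℝ)^m)⁻¹) ≤ ε₂ := by
      calc s * ((B.card:ℝ) * ((2:ℝ)^m)⁻¹)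
          = ∑ _w ∈ B, s * ((2:ℝ)^m)⁻¹ := by
            rw [Finset.sum_const, nsmul_eq_mul]; ring
        _ ≤ ∑ w ∈ B, unif (BitStr m) w * dist w := by
            refine Finset.sum_le_sum fun w hw => ?_
            rw [unif_eq]
            have hmem : s < dist w := by
              rw [hBdef] at hw
              exact (Finset.mem_filter.mp hw).2
            have hip : (0:ℝ) < ((2:ℝ)^m)⁻¹ := by positivity
            nlinarith
        _ ≤ ∑ w : BitStr m, unif (BitStr m) w * dist w :=
            Finset.sum_le_sum_of_subset_of_nonneg (Finset.subset_univ B)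
              (fun w _ _ => mul_nonneg (unif_pos m w).le (hdist0 w))
        _ ≤ ε₂ := havg
    rcases eq_or_lt_of_le hs0 with hzero | hpos
    · have hε₂0 : ε₂ = 0 := by
        have := Real.mul_self_sqrt hε₂
        rw [← hs, ← hzero] at this
        linarith
      have hsum0 : ∑ w : BitStr m, unif (BitStr m) w * dist w = 0 := by
        refine le_antisymm (by rw [hε₂0] at havg; exact havg) ?_
        exact Finset.sum_nonneg fun w _ => mul_nonneg (unif_pos m w).le (hdist0 w)
      have hz := (Finset.sum_eq_zero_iff_of_nonneg
        (fun w _ => mul_nonneg (unif_pos m w).le (hdist0 w))).mp hsum0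
      have hBempty : B = ∅ := by
        rw [hBdef]
        refine Finset.filter_eq_empty_iff.mpr fun w _ => ?_
        have hzw := hz w (Finset.mem_univ w)
        have hd : dist w = 0 := by
          rcases mul_eq_zero.mp hzw with h | h
          · exact absurd h (unif_pos m w).ne'
          · exact h
        rw [hd, ← hzero]
        exact lt_irrefl 0
      rw [hBempty]
      simp [← hzero]
    · have hss : s * s = ε₂ := Real.mul_self_sqrt hε₂
      have := hBsum
      rw [← hss] at this
      exact le_of_mul_le_mul_left this hpos
  set Nb : BitStr n → ℕ := fun y => (univ.filter (fun r => Ext₁ y r ∈ B)).card with hNbdef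
  set Good : BitStr n → Prop := fun y => (Nb y : ℝ) ≤ (s + ε₁) * 2^d with hGood
  have h2d : (0:ℝ) < (2:ℝ)^d := by positivity
  have himp : ∀ y, Good y →
      (∃ S : Finset (BitStr d),
        (1 - s - ε₁) * 2 ^ d ≤ (S.card : ℝ) ∧
        ∀ r ∈ S,
          statDist
            (fun v : BitStr m₂ =>
              ∑ x : BitStr n, if Ext₂ x (Ext₁ y r) = v then pX x else 0)
            (unif (BitStr m₂)) ≤ s) := by
    intro y hy
    refine ⟨univ.filter (fun r => ¬ Ext₁ y r ∈ B), ?_, ?_⟩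
    · have hcard : (univ.filter (fun r => Ext₁ y r ∈ B)).card
          + (univ.filter (fun r => ¬ Ext₁ y r ∈ B)).card = 2^d := by
        rw [Finset.card_filter_add_card_filter_not, Finset.card_univ]
        simp [Fintype.card_fun]
      have hyc : (Nb y : ℝ) ≤ (s + ε₁) * 2^d := hy
      have hcast : ((univ.filter (fun r => Ext₁ y r ∈ B)).card : ℝ)
          + ((univ.filter (fun r => ¬ Ext₁ y r ∈ B)).card : ℝ) = 2^d := by
        exact_mod_cast congrArg (Nat.cast (R := ℝ)) hcard
      have hNby : (Nb y : ℝ) = ((univ.filter (fun r => Ext₁ y r ∈ B)).card : ℝ) := by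
        rw [hNbdef]
      linarith
    · intro r hr
      have hnb := (Finset.mem_filter.mp hr).2
      rw [hBdef, Finset.mem_filter] at hnb
      push_neg at hnb
      exact hnb (Finset.mem_univ _)
  have hfinal : probOf pY (fun y => ¬ Good y) ≤ (2:ℝ)^(-k₁) := by
    by_contra hc
    push_neg at hc
    set μ := probOf pY (fun y => ¬ Good y) with hμ
    have hμpos : 0 < μ := lt_trans (Real.rpow_pos_of_pos two_pos _) hc
    set p' : BitStr n → ℝ := fun y => (if ¬ Good y then pY y else 0) / μ with hp'def
    have hp'nonneg : ∀ y, 0 ≤ p' y := fun y =>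
      div_nonneg (by split <;> simp [hpY.1 y]) hμpos.le
    have hp'sum : ∑ y, p' y = 1 := by
      have e : ∑ y, p' y = (∑ y, if ¬ Good y then pY y else 0) / μ := by
        rw [hp'def, ← Finset.sum_div]
      have e2 : (∑ y : BitStr n, if ¬ Good y then pY y else 0) = μ := by
        simp only [hμ, probOf]
        exact Finset.sum_congr rfl fun y _ => by by_cases h : Good y <;> simp [h]
      rw [e, e2]
      exact div_self hμpos.ne'
    have hp' : IsProb p' := ⟨hp'nonneg, hp'sum⟩
    have hk' : IsKSource p' k₁ := by
      intro a
      have hnum : (if ¬ Good a then pY a else 0) ≤ (2:ℝ)^(-(2*k₁)) := by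
        split
        · exact hY a
        · positivity
      have step1 : p' a ≤ (2:ℝ)^(-(2*k₁)) / μ := by
        rw [hp'def]
        exact div_le_div_of_nonneg_right hnum hμpos.le
      have step2 : (2:ℝ)^(-(2*k₁)) / μ ≤ (2:ℝ)^(-(2*k₁)) / (2:ℝ)^(-k₁) :=
        div_le_div_of_nonneg_left (by positivity) (Real.rpow_pos_of_pos two_pos _) hc.le
      have step3 : (2:ℝ)^(-(2*k₁)) / (2:ℝ)^(-k₁) = (2:ℝ)^(-k₁) := by
        rw [← Real.rpow_sub two_pos]
        congr 1; ring
      calc p' a ≤ (2:ℝ)^(-(2*k₁)) / μ := step1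
        _ ≤ (2:ℝ)^(-(2*k₁)) / (2:ℝ)^(-k₁) := step2
        _ = (2:ℝ)^(-k₁) := step3
    have hstat := h1 p' hp' hk'
    set q' : BitStr m → ℝ := fun v =>
      ∑ x : BitStr n, ∑ r : BitStr d,
        if Ext₁ x r = v then p' x * unif (BitStr d) r else 0 with hq'def
    have habs := le_statDist q' (unif (BitStr m)) B
    have hub : ∑ v ∈ B, q' v ≤ (∑ v ∈ B, unif (BitStr m) v) + ε₁ := by
      have h1' : |∑ a ∈ B, q' a - ∑ a ∈ B, unif (BitStr m) a| ≤ ε₁ := habs.trans hstat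
      have h2' := le_abs_self (∑ a ∈ B, q' a - ∑ a ∈ B, unif (BitStr m) a)
      linarith
    have hunifB : ∑ v ∈ B, unif (BitStr m) v = (B.card : ℝ) * ((2:ℝ)^m)⁻¹ := by
      rw [Finset.sum_congr rfl (fun v _ => unif_eq m v), Finset.sum_const, nsmul_eq_mul]
    have hq'B : ∑ v ∈ B, q' v = ∑ x : BitStr n, p' x * ((Nb x : ℝ) * ((2:ℝ)^d)⁻¹) := by
      rw [hq'def, Finset.sum_comm]
      refine Finset.sum_congr rfl fun x _ => ?_
      rw [Finset.sum_comm]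
      have e1 : ∀ r : BitStr d, ∑ v ∈ B, (if Ext₁ x r = v then p' x * unif (BitStr d) r else 0)
          = if Ext₁ x r ∈ B then p' x * ((2:ℝ)^d)⁻¹ else 0 := by
        intro r
        rw [Finset.sum_ite_eq, unif_eq]
      rw [Finset.sum_congr rfl (fun r _ => e1 r), ← Finset.sum_filter,
        Finset.sum_const, nsmul_eq_mul]
      rw [hNbdef]
      ring
    obtain ⟨x₀, hx₀⟩ : ∃ x, p' x ≠ 0 := by
      by_contra hall
      push_neg at hall
      rw [Finset.sum_eq_zero (fun x _ => hall x)] at hp'sum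
      norm_num at hp'sum
    have hx₀pos : 0 < p' x₀ := (hp'nonneg x₀).lt_of_ne (Ne.symm hx₀)
    have hbadx : ∀ x, p' x ≠ 0 → (s + ε₁) * 2^d < (Nb x : ℝ) := by
      intro x hx
      by_cases hg : Good x
      · exfalso; apply hx; rw [hp'def]; simp [hg]
      · simp only [hGood] at hg; push_neg at hg; exact hg
    have hratio : ∀ x, p' x ≠ 0 → s + ε₁ < (Nb x : ℝ) * ((2:ℝ)^d)⁻¹ := by
      intro x hx
      have := hbadx x hx
      rw [← div_eq_mul_inv, lt_div_iff₀ h2d]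
      linarith
    have hpt : ∀ x, p' x * (s + ε₁) ≤ p' x * ((Nb x : ℝ) * ((2:ℝ)^d)⁻¹) := by
      intro x
      rcases eq_or_lt_of_le (hp'nonneg x) with h0 | hpos
      · rw [← h0]; simp
      · exact (mul_le_mul_iff_right₀ hpos).mpr (hratio x hpos.ne').le
    have hstrict : p' x₀ * (s + ε₁) < p' x₀ * ((Nb x₀ : ℝ) * ((2:ℝ)^d)⁻¹) :=
      (mul_lt_mul_iff_right₀ hx₀pos).mpr (hratio x₀ hx₀)
    have hsum_lt : s + ε₁ < ∑ x, p' x * ((Nb x : ℝ) * ((2:ℝ)^d)⁻¹) := by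
      calc s + ε₁ = ∑ x, p' x * (s + ε₁) := by
            rw [← Finset.sum_mul, hp'sum, one_mul]
        _ < _ := Finset.sum_lt_sum (fun x _ => hpt x) ⟨x₀, Finset.mem_univ x₀, hstrict⟩
    rw [hq'B, hunifB] at hub
    linarith [hub, hsum_lt, hB]
  have hmono := probOf_mono hpY.1 himp
  have hsplit := probOf_compl hpY.2 Good
  linarith
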